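/- Let X be symmetric positive definite with square root X = X^{1/2}(X^{1/2})ᵀ and another factorization X = L·Lᵀ with L invertible, and let σ be a symmetric matrix. Then X^{1/2}·exp(X^{-1/2}·σ·X^{-T/2})·X^{T/2} = L·exp(L⁻¹·σ·L^{-T})·Lᵀ. -/

import Mathlib

open Matrix

/-- The exponential map of the affine-invariant metric on the SPD manifold is independent of
the chosen square-root factorization: if `X = R·Rᵀ = L·Lᵀ` with `R, L` invertible and `σ` is
symmetric, then `R·exp(R⁻¹ σ R⁻ᵀ)·Rᵀ = L·exp(L⁻¹ σ L⁻ᵀ)·Lᵀ`. -/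
theorem stmt_8 {n : ℕ} (X R L σ : Matrix (Fin n) (Fin n) ℝ)
    (hX : X.PosDef) (hXR : X = R * Rᵀ) (hXL : X = L * Lᵀ)
    (hR : IsUnit R.det) (hL : IsUnit L.det) (hσ : σ.IsSymm) :
    R * NormedSpace.exp (R⁻¹ * σ * (Rᵀ)⁻¹) * Rᵀ
      = L * NormedSpace.exp (L⁻¹ * σ * (Lᵀ)⁻¹) * Lᵀ := by
  obtain ⟨Q, hQ⟩ : ∃ Q, Q = L⁻¹ * R := ⟨_, rfl⟩
  have hLT : IsUnit (Lᵀ).det := by rwa [Matrix.det_transpose]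
  have hQorth : Q * Qᵀ = 1 := by
    have h : L⁻¹ * (R * Rᵀ) * (Lᵀ)⁻¹ = 1 := by
      rw [← hXR, hXL, ← Matrix.mul_assoc, Matrix.nonsing_inv_mul _ hL, Matrix.one_mul,
        Matrix.mul_nonsing_inv _ hLT]
    calc Q * Qᵀ = L⁻¹ * (R * Rᵀ) * (Lᵀ)⁻¹ := by
          rw [hQ, Matrix.transpose_mul, Matrix.transpose_nonsing_inv]; noncomm_ring
      _ = 1 := h
  have hQunit : IsUnit Q.det := by
    have := congrArg Matrix.det hQorth
    rw [Matrix.det_mul, Matrix.det_one, Matrix.det_transpose] at this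
    exact IsUnit.of_mul_eq_one _ this
  have hQinv : Q⁻¹ = Qᵀ := Matrix.inv_eq_right_inv hQorth
  have hQorth' : Qᵀ * Q = 1 := by rw [← hQinv, Matrix.nonsing_inv_mul _ hQunit]
  have hQTinv : (Qᵀ)⁻¹ = Q := Matrix.inv_eq_right_inv hQorth'
  have hRLQ : R = L * Q := by
    rw [hQ, ← Matrix.mul_assoc, Matrix.mul_nonsing_inv _ hL, Matrix.one_mul]
  have hconj : R⁻¹ * σ * (Rᵀ)⁻¹ = Q⁻¹ * (L⁻¹ * σ * (Lᵀ)⁻¹) * Q := by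
    rw [hRLQ, Matrix.mul_inv_rev, Matrix.transpose_mul, Matrix.mul_inv_rev, hQTinv]
    noncomm_ring
  rw [hconj, Matrix.exp_conj' _ _ ((Matrix.isUnit_iff_isUnit_det _).mpr hQunit), hRLQ]
  have h1 : Q * Q⁻¹ = 1 := Matrix.mul_nonsing_inv _ hQunit
  calc L * Q * (Q⁻¹ * NormedSpace.exp (L⁻¹ * σ * (Lᵀ)⁻¹) * Q) * (L * Q)ᵀ
      = L * ((Q * Q⁻¹) * NormedSpace.exp (L⁻¹ * σ * (Lᵀ)⁻¹) * (Q * Qᵀ)) * Lᵀ := by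
        rw [Matrix.transpose_mul]; noncomm_ring
    _ = L * NormedSpace.exp (L⁻¹ * σ * (Lᵀ)⁻¹) * Lᵀ := by
        rw [h1, hQorth, Matrix.one_mul, Matrix.mul_one]
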